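/- Let x₁,…,xₙ and y₁,…,yₙ and λ be complex numbers such that yᵢ - xⱼ ≠ 0 for all i,j and λ ≠ 0 and λ + ∑ₖ(yₖ - xₖ) arbitrary. Define the n×n matrix M with entries M_{ij} = (yᵢ - xⱼ + λ)/(λ (yᵢ - xⱼ)). Then det M = (λ + ∑_{k=1}^n (yₖ - xₖ))/λ · (∏_{k<l} (yₖ - yₗ)(xₗ - xₖ)) / (∏_{k,l} (yₖ - xₗ)). -/

import Mathlib

open Finset

lemma sum_mulE1 {n : ℕ} (L : Fin (n+1)) (v : Fin (n+1) → ℂ) (j : Fin (n+1)) :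
    ∑ l, v l * (if l = j then 1 else if l = L then -1 else 0)
      = if j = L then v L else v j - v L := by
  have key : ∀ l, v l * (if l = j then 1 else if l = L then -1 else 0)
      = (if l = j then v l else 0) + (if j = L then 0 else if l = L then -v l else 0) := by
    intro l; split_ifs <;> simp_all
  rw [Finset.sum_congr rfl fun l _ => key l, Finset.sum_add_distrib]
  by_cases hj : j = L <;>
    simp [hj, Finset.sum_ite_eq' univ, sub_eq_add_neg]

lemma sum_E2mul {n : ℕ} (L : Fin (n+1)) (c : ℂ) (w : Fin (n+1) → ℂ) (i : Fin (n+1)) :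
    ∑ k, (if i = k then 1 else if k = L then -c else 0) * w k
      = if i = L then w L else w i - c * w L := by
  have key : ∀ k, (if i = k then 1 else if k = L then -c else 0) * w k
      = (if k = i then w k else 0) + (if i = L then 0 else if k = L then -(c * w k) else 0) := by
    intro k; split_ifs <;> simp_all
  rw [Finset.sum_congr rfl fun k _ => key k, Finset.sum_add_distrib]
  by_cases hi : i = L <;>
    simp [hi, Finset.sum_ite_eq' univ, sub_eq_add_neg]

lemma fin_Ioi_last (n : ℕ) : Finset.Ioi (Fin.last n) = ∅ := by
  ext l; simp only [mem_Ioi, Finset.notMem_empty, iff_false, not_lt]; exact Fin.le_last l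

lemma fin_Ioi_castSucc {n : ℕ} (k : Fin n) :
    Finset.Ioi (k.castSucc) = insert (Fin.last n) ((Finset.Ioi k).map Fin.castSuccEmb) := by
  ext l
  simp only [mem_Ioi, mem_insert, mem_map, Fin.castSuccEmb, OrderEmbedding.coe_ofStrictMono,
    Function.Embedding.coeFn_mk]
  constructor
  · intro hl
    rcases Fin.eq_castSucc_or_eq_last l with ⟨m, rfl⟩ | rfl
    · exact Or.inr ⟨m, by simpa using hl, rfl⟩
    · exact Or.inl rfl
  · rintro (rfl | ⟨m, hm, rfl⟩)
    · exact Fin.castSucc_lt_last k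
    · exact Fin.castSucc_lt_castSucc_iff.mpr hm

lemma prod_Ioi_split {n : ℕ} (f : Fin (n+1) → Fin (n+1) → ℂ) :
    ∏ k, ∏ l ∈ Finset.Ioi k, f k l
      = (∏ k : Fin n, ∏ l ∈ Finset.Ioi k, f k.castSucc l.castSucc)
        * ∏ k : Fin n, f k.castSucc (Fin.last n) := by
  rw [Fin.prod_univ_castSucc, fin_Ioi_last, Finset.prod_empty, mul_one, ← Finset.prod_mul_distrib]
  refine Finset.prod_congr rfl fun k _ => ?_
  rw [fin_Ioi_castSucc, Finset.prod_insert (by simp only [Finset.mem_map, not_exists, not_and]; intro m _ hm; exact (Fin.castSucc_lt_last m).ne hm),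
    Finset.prod_map, mul_comm]
  rfl

set_option maxHeartbeats 2000000 in
lemma cauchy_aux : ∀ (n : ℕ) (x y : Fin n → ℂ) (t : ℂ),
    (∀ i j, y i - x j ≠ 0) →
    (∀ s : Finset (Fin n), t + ∑ k ∈ s, (y k - x k) ≠ 0) →
    (t * ∏ k, ∏ l, (y k - x l)) * Matrix.det (Matrix.of fun i j => (y i - x j + t) / (t * (y i - x j)))
      = (t + ∑ k, (y k - x k))
        * (∏ k, ∏ l ∈ Finset.Ioi k, (y k - y l) * (x l - x k)) := by
  intro n
  induction n with
  | zero =>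
    intro x y t h hs
    simp [Matrix.det_fin_zero]
  | succ n ih =>
    intro x y t h hs
    have ht : t ≠ 0 := by simpa using hs ∅
    set L := Fin.last n with hL
    have ht' : t + (y L - x L) ≠ 0 := by simpa using hs {L}
    set t' : ℂ := t + (y L - x L) with ht'def
    set M : Matrix (Fin (n+1)) (Fin (n+1)) ℂ :=
      Matrix.of fun i j => (y i - x j + t) / (t * (y i - x j)) with hM
    set c : Fin (n+1) → ℂ :=
      fun i => (y i - x L + t) * (y L - x L) / ((y i - x L) * t') with hc
    set E₁ : Matrix (Fin (n+1)) (Fin (n+1)) ℂ :=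
      Matrix.of fun i j => if i = j then 1 else if i = L then -1 else 0 with hE₁
    set E₂ : Matrix (Fin (n+1)) (Fin (n+1)) ℂ :=
      Matrix.of fun i j => if i = j then 1 else if j = L then -(c i) else 0 with hE₂
    set G : Matrix (Fin (n+1)) (Fin (n+1)) ℂ := Matrix.of fun i j =>
      if j = L then (if i = L then t' / (t * (y L - x L)) else 0)
      else if i = L then (x j - x L) / ((y L - x j) * (y L - x L))
      else (x j - x L) * (y L - y i) / ((y i - x L) * (y L - x j))
            * ((y i - x j + t') / (t' * (y i - x j))) with hG
    have hdetE₁ : E₁.det = 1 := by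
      rw [Matrix.det_of_lowerTriangular]
      · simp [hE₁]
      · intro i j hij
        have hij' : i < j := hij
        have h1 : i ≠ j := hij'.ne
        have h2 : i ≠ L := fun hi => absurd hij' (by rw [hi]; exact (Fin.le_last j).not_gt)
        simp [hE₁, h1, h2]
    have hdetE₂ : E₂.det = 1 := by
      rw [Matrix.det_of_upperTriangular]
      · simp [hE₂]
      · intro i j hij
        have h1 : i ≠ j := hij.ne'
        have h2 : j ≠ L := fun hj => absurd hij (by rw [hj]; exact (Fin.le_last i).not_gt)
        simp [hE₂, h1, h2]
    have hME₁ : ∀ i j, (M * E₁) i j = if j = L then M i L else M i j - M i L := by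
      intro i j
      rw [Matrix.mul_apply]
      simpa [hE₁] using sum_mulE1 L (fun l => M i l) j
    have ht'2 : t + (y L - x L) ≠ 0 := by rw [← ht'def]; exact ht'
    have key : ∀ a b : Fin (n+1), M a b - M a L = (x b - x L) / ((y a - x b) * (y a - x L)) := by
      intro a b
      simp only [hM, Matrix.of_apply]
      field_simp [ht, h a b, h a L]
      ring
    have hGeq : E₂ * M * E₁ = G := by
      rw [mul_assoc]
      ext i j
      have hmul : (E₂ * (M * E₁)) i j
          = if i = L then (M * E₁) L j else (M * E₁) i j - c i * (M * E₁) L j := by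
        rw [Matrix.mul_apply]
        simpa [hE₂] using sum_E2mul L (c i) (fun k => (M * E₁) k j) i
      rcases eq_or_ne j L with rfl | hjL <;> rcases eq_or_ne i L with rfl | hiL
      · simp only [hmul, hME₁]
        simp only [hmul, hME₁, if_pos rfl, eq_self_iff_true, if_true, ite_true, hG, hM,
          Matrix.of_apply]
        rw [ht'def]
        congr 1
        ring
      · simp only [hmul, hME₁]
        simp only [hmul, hME₁, if_pos rfl, eq_self_iff_true, if_true, ite_true, if_neg hiL,
          hG, hM, hc, Matrix.of_apply]
        rw [ht'def, sub_eq_zero]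
        field_simp [ht, ht'2, h i L, h L L]
        ring
      · simp only [hmul, hME₁, if_pos rfl, eq_self_iff_true, if_true, ite_true, if_neg hjL,
          hG, Matrix.of_apply]
        rw [key L j]
      · simp only [hmul, hME₁, if_neg hjL, if_neg hiL, hG, Matrix.of_apply]
        rw [key i j, key L j, hc]
        rw [ht'def]
        field_simp [ht, ht'2, h i j, h i L, h L j, h L L]
        ring
    have hdetMG : M.det = G.det := by
      have := congrArg Matrix.det hGeq
      rwa [Matrix.det_mul, Matrix.det_mul, hdetE₂, hdetE₁, one_mul, mul_one] at this
    set x' : Fin n → ℂ := fun i => x i.castSucc with hx'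
    set y' : Fin n → ℂ := fun i => y i.castSucc with hy'
    set M' : Matrix (Fin n) (Fin n) ℂ :=
      Matrix.of fun i j => (y' i - x' j + t') / (t' * (y' i - x' j)) with hM'
    have hsub : G.submatrix Fin.castSucc Fin.castSucc
        = Matrix.of (fun i j : Fin n => ((y L - y' i) / (y' i - x L)) *
            (Matrix.of (fun i j : Fin n => ((x' j - x L) / (y L - x' j)) * M' i j) i j)) := by
      ext i j
      have hiL : (i.castSucc : Fin (n+1)) ≠ L := (Fin.castSucc_lt_last i).ne
      have hjL : (j.castSucc : Fin (n+1)) ≠ L := (Fin.castSucc_lt_last j).ne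
      simp only [Matrix.submatrix_apply, hG, hM', Matrix.of_apply, if_neg hiL, if_neg hjL,
        hx', hy']
      field_simp
    have hGiL : ∀ i : Fin (n+1), i ≠ L → G i L = 0 := by
      intro i hi
      simp only [hG, Matrix.of_apply, if_pos rfl, if_neg hi, eq_self_iff_true, if_true, ite_true]
    have hdetG : G.det = t' / (t * (y L - x L)) *
        ((∏ i : Fin n, (y L - y' i) / (y' i - x L)) *
         ((∏ j : Fin n, (x' j - x L) / (y L - x' j)) * M'.det)) := by
      rw [Matrix.det_succ_column G L]
      rw [Finset.sum_eq_single L (fun i _ hi => by rw [hGiL i hi]; ring) (by simp)]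
      have h1 : ((-1 : ℂ)) ^ ((L : ℕ) + (L : ℕ)) = 1 := by
        rw [← two_mul, pow_mul]; norm_num
      have h2 : G L L = t' / (t * (y L - x L)) := by
        simp only [hG, Matrix.of_apply, if_pos rfl, eq_self_iff_true, if_true, ite_true]
      rw [h1, h2, one_mul]
      have h3 : (Fin.last n).succAbove = Fin.castSucc := Fin.succAbove_last
      rw [show L.succAbove = Fin.castSucc from h3]
      rw [hsub, Matrix.det_mul_column, Matrix.det_mul_row]
    have h' : ∀ i j, y' i - x' j ≠ 0 := fun i j => h _ _
    have hs' : ∀ s : Finset (Fin n), t' + ∑ k ∈ s, (y' k - x' k) ≠ 0 := by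
      intro s
      have hLnot : L ∉ s.map Fin.castSuccEmb := by
        simp only [Finset.mem_map]
        rintro ⟨m, _, hm⟩
        exact (Fin.castSucc_lt_last m).ne hm
      have h0 := hs (insert L (s.map Fin.castSuccEmb))
      rw [Finset.sum_insert hLnot, Finset.sum_map] at h0
      rw [ht'def, add_assoc]
      simpa [hx', hy', Fin.castSuccEmb, Fin.castSucc] using h0
    have hIH := ih x' y' t' h' hs'
    rw [← hM'] at hIH
    have hS : ∑ k : Fin (n+1), (y k - x k) = (∑ k : Fin n, (y' k - x' k)) + (y L - x L) := by
      rw [Fin.sum_univ_castSucc]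
    have hP : ∏ k : Fin (n+1), ∏ l ∈ Finset.Ioi k, (y k - y l) * (x l - x k)
        = (∏ k : Fin n, ∏ l ∈ Finset.Ioi k, (y' k - y' l) * (x' l - x' k))
          * ((∏ k : Fin n, (y L - y' k)) * (∏ k : Fin n, (x' k - x L))) := by
      rw [prod_Ioi_split (fun k l => (y k - y l) * (x l - x k))]
      congr 1
      rw [← Finset.prod_mul_distrib]
      refine Finset.prod_congr rfl fun k _ => ?_
      simp only [hx', hy']
      ring
    have hQ : ∏ k : Fin (n+1), ∏ l : Fin (n+1), (y k - x l)
        = ((∏ k : Fin n, ∏ l : Fin n, (y' k - x' l)) * (∏ k : Fin n, (y' k - x L)))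
          * ((∏ l : Fin n, (y L - x' l)) * (y L - x L)) := by
      rw [Fin.prod_univ_castSucc (f := fun k => ∏ l : Fin (n+1), (y k - x l))]
      congr 1
      · rw [← Finset.prod_mul_distrib]
        refine Finset.prod_congr rfl fun k _ => ?_
        rw [Fin.prod_univ_castSucc (f := fun l => (y k.castSucc - x l))]
      · rw [Fin.prod_univ_castSucc (f := fun l => (y L - x l))]
    have hA : (∏ k : Fin n, (y' k - x L)) ≠ 0 :=
      Finset.prod_ne_zero_iff.mpr fun k _ => h _ _
    have hB : (∏ l : Fin n, (y L - x' l)) ≠ 0 :=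
      Finset.prod_ne_zero_iff.mpr fun k _ => h _ _
    have hd : y L - x L ≠ 0 := h L L
    have step1 : (t * ∏ k, ∏ l, (y k - x l)) * Matrix.det M
        = ((∏ k : Fin n, (y L - y' k)) * (∏ k : Fin n, (x' k - x L)))
          * ((t' * ∏ k : Fin n, ∏ l : Fin n, (y' k - x' l)) * Matrix.det M') := by
      rw [hdetMG, hdetG, hQ, Finset.prod_div_distrib, Finset.prod_div_distrib]
      field_simp [ht, hd, hA, hB]
    rw [step1, hIH, hS, hP, ht'def]
    ring

open Polynomial

lemma entry_eq (t d p : ℂ) (ht : t ≠ 0) (hd : d ≠ 0) :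
    (t + d) * (p / d) = (t * p) * ((d + t) / (t * d)) := by
  field_simp
  ring

theorem rational_cauchy_det (n : ℕ) (x y : Fin n → ℂ) (lam : ℂ) (hlam : lam ≠ 0)
    (h : ∀ i j, y i - x j ≠ 0) :
    Matrix.det (Matrix.of fun i j => (y i - x j + lam) / (lam * (y i - x j)))
      = (lam + ∑ k, (y k - x k)) / lam
        * (∏ k, ∏ l ∈ Finset.Ioi k, (y k - y l) * (x l - x k))
        / (∏ k, ∏ l, (y k - x l)) := by
  rcases n with _ | m
  · simp [Matrix.det_fin_zero, hlam]
  set S : ℂ := ∑ k, (y k - x k) with hS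
  set P : ℂ := ∏ k, ∏ l ∈ Finset.Ioi k, (y k - y l) * (x l - x k) with hP
  set Q : ℂ := ∏ k, ∏ l, (y k - x l) with hQ
  have hQ0 : Q ≠ 0 :=
    Finset.prod_ne_zero_iff.mpr fun k _ => Finset.prod_ne_zero_iff.mpr fun l _ => h _ _
  set N : Matrix (Fin (m+1)) (Fin (m+1)) ℂ[X] :=
    Matrix.of (fun i j => (X + C (y i - x j)) * C ((∏ k, (y i - x k)) / (y i - x j))) with hN
  set q : ℂ[X] := N.det with hq
  set r : ℂ[X] := (X + C S) * X ^ m * C P with hr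
  have hpoly : ∀ t : ℂ, t ≠ 0 →
      Polynomial.eval t q = t ^ (m+1) * Q *
        Matrix.det (Matrix.of fun i j => (y i - x j + t) / (t * (y i - x j))) := by
    intro t ht
    have hmap : N.map ⇑(Polynomial.evalRingHom t) =
        Matrix.of (fun i j => (t * ∏ k, (y i - x k)) *
          (Matrix.of (fun i j => (y i - x j + t) / (t * (y i - x j))) i j)) := by
      ext i j
      simp only [hN, Matrix.map_apply, Matrix.of_apply, coe_evalRingHom, eval_mul, eval_add,
        eval_X, eval_C]
      rw [entry_eq t (y i - x j) _ ht (h i j), add_comm (y i - x j) t]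
    have h2 : (∏ i : Fin (m+1), (t * ∏ k, (y i - x k))) = t ^ (m+1) * Q := by
      rw [Finset.prod_mul_distrib, Finset.prod_const, hQ, Finset.card_univ, Fintype.card_fin]
    rw [hq, show Polynomial.eval t N.det = (Polynomial.evalRingHom t) N.det from rfl,
      RingHom.map_det, RingHom.mapMatrix_apply, hmap, Matrix.det_mul_column, h2]
  have heval : ∀ t : ℂ, t ≠ 0 →
      (∀ s : Finset (Fin (m+1)), t + ∑ k ∈ s, (y k - x k) ≠ 0) →
      Polynomial.eval t q = Polynomial.eval t r := by
    intro t ht hts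
    have h3 := cauchy_aux (m+1) x y t h hts
    rw [← hQ, ← hS, ← hP] at h3
    rw [hpoly t ht, hr]
    simp only [eval_mul, eval_add, eval_X, eval_C, eval_pow]
    calc t ^ (m+1) * Q * Matrix.det (Matrix.of fun i j => (y i - x j + t) / (t * (y i - x j)))
        = t ^ m * ((t * Q) * Matrix.det (Matrix.of fun i j => (y i - x j + t) / (t * (y i - x j)))) := by
          rw [pow_succ]; ring
      _ = t ^ m * ((t + S) * P) := by rw [h3]
      _ = (t + S) * t ^ m * P := by ring
  have hqr : q = r := by
    by_contra hne
    have hfin : {t : ℂ | (q - r).IsRoot t}.Finite :=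
      Polynomial.finite_setOf_isRoot (sub_ne_zero.mpr hne)
    set bad : Finset ℂ :=
      insert 0 ((Finset.univ : Finset (Finset (Fin (m+1)))).image
        fun s => -(∑ k ∈ s, (y k - x k))) with hbad
    have hsub : (bad : Set ℂ)ᶜ ⊆ {t : ℂ | (q - r).IsRoot t} := by
      intro t hti
      have ht0 : t ≠ 0 := by
        intro h0
        exact hti (by simp [hbad, h0])
      have hts : ∀ s : Finset (Fin (m+1)), t + ∑ k ∈ s, (y k - x k) ≠ 0 := by
        intro s hsum
        refine hti (Finset.mem_coe.mpr (Finset.mem_insert.mpr (Or.inr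
          (Finset.mem_image.mpr ⟨s, Finset.mem_univ s, ?_⟩))))
        rw [← eq_neg_of_add_eq_zero_left hsum]
      simp only [Set.mem_setOf_eq, Polynomial.IsRoot, eval_sub, sub_eq_zero]
      exact heval t ht0 hts
    exact bad.finite_toSet.infinite_compl (hfin.subset hsub)
  have hev := congrArg (Polynomial.eval lam) hqr
  rw [hpoly lam hlam] at hev
  simp only [hr, eval_mul, eval_add, eval_X, eval_C, eval_pow] at hev
  have hcancel : lam * Q * Matrix.det (Matrix.of fun i j => (y i - x j + lam) / (lam * (y i - x j)))
      = (lam + S) * P := by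
    apply mul_left_cancel₀ (pow_ne_zero m hlam)
    rw [pow_succ] at hev
    linear_combination hev
  set D := Matrix.det (Matrix.of fun i j => (y i - x j + lam) / (lam * (y i - x j))) with hD
  field_simp [hlam, hQ0]
  linear_combination hcancel
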